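/- Let R be an n×n Hermitian positive semidefinite matrix with spectral norm ‖R‖. For any z < 0 and any complex numbers α, α' with nonnegative real parts, defining Q(α) = (−zI + αR)^{-1}, we have |(1/n)·Tr(R·Q(α)·R·Q(α'))| ≤ ‖R‖²/z², so that the map α ↦ (1/n)·Tr(R(−zI + αR)^{-1}) is Lipschitz with constant ‖R‖²/z² on the right half-plane. -/

import Mathlib

open Matrix MeasureTheory Filter
open scoped ComplexOrder Matrix.Norms.L2Operator

lemma quadre {n : ℕ} {R : Matrix (Fin n) (Fin n) ℂ} (hR : R.PosSemidef) {z : ℝ}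
    {α : ℂ} (hα : 0 ≤ α.re) (x : Fin n → ℂ) :
    (-z) * (∑ i, Complex.normSq (x i)) ≤
      (star x ⬝ᵥ (((-z : ℂ) • (1 : Matrix (Fin n) (Fin n) ℂ) + α • R) *ᵥ x)).re := by
  have hq := (posSemidef_iff_dotProduct_mulVec.mp hR).2 x
  rw [Complex.le_def] at hq
  have hs : star x ⬝ᵥ x = ((∑ i, Complex.normSq (x i) : ℝ) : ℂ) := by
    simp [dotProduct, Complex.star_def, mul_comm, Complex.mul_conj]
  rw [add_mulVec, smul_mulVec, one_mulVec, smul_mulVec, dotProduct_add,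
    dotProduct_smul, dotProduct_smul, hs]
  have h1 : ((-z:ℂ) • ((∑ i, Complex.normSq (x i) : ℝ) : ℂ)).re
      = (-z) * ∑ i, Complex.normSq (x i) := by simp
  have h2 : (α • (star x ⬝ᵥ R *ᵥ x)).re = α.re * (star x ⬝ᵥ R *ᵥ x).re := by
    rw [smul_eq_mul, Complex.mul_re, ← hq.2]; simp
  rw [Complex.add_re, h1, h2]
  nlinarith [hq.1, mul_nonneg hα hq.1]

lemma Munit {n : ℕ} {R : Matrix (Fin n) (Fin n) ℂ} (hR : R.PosSemidef) {z : ℝ} (hz : z < 0)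
    {α : ℂ} (hα : 0 ≤ α.re) :
    IsUnit ((-z : ℂ) • (1 : Matrix (Fin n) (Fin n) ℂ) + α • R).det := by
  set M := (-z : ℂ) • (1 : Matrix (Fin n) (Fin n) ℂ) + α • R with hM
  rw [isUnit_iff_ne_zero]
  intro hdet
  obtain ⟨v, hv, hMv⟩ := (Matrix.exists_mulVec_eq_zero_iff).mpr hdet
  have h := quadre hR (z := z) hα v
  rw [hMv] at h
  simp only [dotProduct_zero, Complex.zero_re] at h
  have hpos : 0 < ∑ i, Complex.normSq (v i) := by
    obtain ⟨i, hi⟩ := Function.ne_iff.mp hv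
    exact Finset.sum_pos' (fun j _ => Complex.normSq_nonneg _)
      ⟨i, Finset.mem_univ i, Complex.normSq_pos.mpr hi⟩
  nlinarith

lemma norm_sq_sum {n : ℕ} (x : Fin n → ℂ) :
    ∑ i, Complex.normSq (x i) = ‖(WithLp.equiv 2 (Fin n → ℂ)).symm x‖ ^ 2 := by
  rw [PiLp.norm_sq_eq_of_L2]
  simp [Complex.normSq_eq_norm_sq]

lemma inv_mulVec_norm {n : ℕ} {R : Matrix (Fin n) (Fin n) ℂ} (hR : R.PosSemidef) {z : ℝ}
    (hz : z < 0) {α : ℂ} (hα : 0 ≤ α.re) (y : Fin n → ℂ) :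
    ‖(WithLp.equiv 2 (Fin n → ℂ)).symm
        ((((-z : ℂ) • (1 : Matrix (Fin n) (Fin n) ℂ) + α • R)⁻¹) *ᵥ y)‖ ≤
      (-z)⁻¹ * ‖(WithLp.equiv 2 (Fin n → ℂ)).symm y‖ := by
  set M := (-z : ℂ) • (1 : Matrix (Fin n) (Fin n) ℂ) + α • R with hM
  set x := M⁻¹ *ᵥ y with hx
  have hMx : M *ᵥ x = y := by
    rw [hx, mulVec_mulVec, Matrix.mul_nonsing_inv _ (Munit hR hz hα), one_mulVec]
  have h := quadre hR (z := z) hα x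
  rw [hMx] at h
  have hre : (star x ⬝ᵥ y).re ≤ ‖(WithLp.equiv 2 (Fin n → ℂ)).symm x‖ *
      ‖(WithLp.equiv 2 (Fin n → ℂ)).symm y‖ := by
    calc (star x ⬝ᵥ y).re ≤ ‖star x ⬝ᵥ y‖ := Complex.re_le_norm _
      _ = ‖(inner ℂ ((WithLp.equiv 2 (Fin n → ℂ)).symm x)
            ((WithLp.equiv 2 (Fin n → ℂ)).symm y) : ℂ)‖ := by
          rw [dotProduct_comm]; rfl
      _ ≤ _ := norm_inner_le_norm _ _
  rw [norm_sq_sum] at h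
  set a := ‖(WithLp.equiv 2 (Fin n → ℂ)).symm x‖
  set b := ‖(WithLp.equiv 2 (Fin n → ℂ)).symm y‖
  have ha : 0 ≤ a := norm_nonneg _
  have hb : 0 ≤ b := norm_nonneg _
  have key : (-z) * a ^ 2 ≤ a * b := le_trans h hre
  rcases eq_or_lt_of_le ha with h0 | h0
  · rw [← h0]
    exact mul_nonneg (inv_nonneg.mpr (by linarith)) hb
  · rw [inv_mul_eq_div, le_div_iff₀ (by linarith : (0:ℝ) < -z)]
    nlinarith

lemma opnorm_le {n : ℕ} (c : ℝ) (hc : 0 ≤ c) (A : Matrix (Fin n) (Fin n) ℂ)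
    (h : ∀ y : Fin n → ℂ, ‖(WithLp.equiv 2 (Fin n → ℂ)).symm (A *ᵥ y)‖ ≤
      c * ‖(WithLp.equiv 2 (Fin n → ℂ)).symm y‖) : ‖A‖ ≤ c := by
  rw [Matrix.l2_opNorm_def]
  apply ContinuousLinearMap.opNorm_le_bound _ hc
  intro y
  have := h (WithLp.equiv 2 (Fin n → ℂ) y)
  simpa [Matrix.toEuclideanLin_apply] using this

lemma coord_le {n : ℕ} (v : Fin n → ℂ) (i : Fin n) :
    ‖v i‖ ≤ ‖(WithLp.equiv 2 (Fin n → ℂ)).symm v‖ := by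
  have h : Complex.normSq (v i) ≤ ‖(WithLp.equiv 2 (Fin n → ℂ)).symm v‖ ^ 2 := by
    rw [← norm_sq_sum]
    exact Finset.single_le_sum (fun j _ => Complex.normSq_nonneg _) (Finset.mem_univ i)
  rw [Complex.norm_def]
  calc Real.sqrt (Complex.normSq (v i)) ≤ Real.sqrt (‖(WithLp.equiv 2 (Fin n → ℂ)).symm v‖ ^ 2) :=
        Real.sqrt_le_sqrt h
    _ = _ := Real.sqrt_sq (norm_nonneg _)

lemma trace_le {n : ℕ} (A : Matrix (Fin n) (Fin n) ℂ) :
    ‖A.trace‖ ≤ n * ‖A‖ := by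
  have hdiag : ∀ i, ‖A i i‖ ≤ ‖A‖ := by
    intro i
    have h3 := Matrix.l2_opNorm_mulVec A ((WithLp.equiv 2 (Fin n → ℂ)).symm (Pi.single i 1))
    have h4 : ‖((WithLp.equiv 2 (Fin n → ℂ)).symm (Pi.single i 1))‖ = 1 := by
      rw [WithLp.equiv_symm_apply, PiLp.norm_toLp_single]; simp
    have h2 := coord_le (A *ᵥ Pi.single i 1) i
    rw [Matrix.mulVec_single] at h2
    simp only [MulOpposite.op_one, one_smul] at h2
    calc ‖A i i‖ ≤ ‖(WithLp.equiv 2 (Fin n → ℂ)).symm (A *ᵥ Pi.single i 1)‖ := by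
          simpa [Matrix.mulVec_single] using h2
      _ ≤ ‖A‖ * 1 := by rw [← h4]; exact h3
      _ = ‖A‖ := mul_one _
  calc ‖A.trace‖ ≤ ∑ i, ‖A i i‖ := by
        rw [Matrix.trace]
        exact norm_sum_le _ _
    _ ≤ ∑ _i : Fin n, ‖A‖ := Finset.sum_le_sum fun i _ => hdiag i
    _ = n * ‖A‖ := by simp [Finset.sum_const]

lemma inv_opnorm_le {n : ℕ} {R : Matrix (Fin n) (Fin n) ℂ} (hR : R.PosSemidef) {z : ℝ}
    (hz : z < 0) {α : ℂ} (hα : 0 ≤ α.re) :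
    ‖((-z : ℂ) • (1 : Matrix (Fin n) (Fin n) ℂ) + α • R)⁻¹‖ ≤ (-z)⁻¹ :=
  opnorm_le _ (inv_nonneg.mpr (by linarith)) _ (fun y => inv_mulVec_norm hR hz hα y)

/-- Resolvent product trace bound and Lipschitz continuity of the trace functional. -/
theorem stmt_3 {n : ℕ} (hn : 0 < n) (R : Matrix (Fin n) (Fin n) ℂ) (hR : R.PosSemidef)
    (z : ℝ) (hz : z < 0) :
    (∀ α α' : ℂ, 0 ≤ α.re → 0 ≤ α'.re →
      ‖((1 / (n : ℂ)) * Matrix.trace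
        (R * ((-z : ℂ) • (1 : Matrix (Fin n) (Fin n) ℂ) + α • R)⁻¹ *
         R * ((-z : ℂ) • (1 : Matrix (Fin n) (Fin n) ℂ) + α' • R)⁻¹))‖ ≤ ‖R‖ ^ 2 / z ^ 2) ∧
    LipschitzOnWith (‖R‖ ^ 2 / z ^ 2).toNNReal
      (fun α : ℂ => (1 / (n : ℂ)) * Matrix.trace
        (R * ((-z : ℂ) • (1 : Matrix (Fin n) (Fin n) ℂ) + α • R)⁻¹))
      {α : ℂ | 0 ≤ α.re} := by
  set M : ℂ → Matrix (Fin n) (Fin n) ℂ :=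
    fun α => (-z : ℂ) • (1 : Matrix (Fin n) (Fin n) ℂ) + α • R with hMdef
  have hzpos : (0:ℝ) < -z := by linarith
  have hbound : ∀ α α' : ℂ, 0 ≤ α.re → 0 ≤ α'.re →
      ‖(1 / (n : ℂ)) * Matrix.trace (R * (M α)⁻¹ * R * (M α')⁻¹)‖ ≤
        ‖R‖ ^ 2 / z ^ 2 := by
    intro α α' hα hα'
    have hQ : ‖(M α)⁻¹‖ ≤ (-z)⁻¹ := inv_opnorm_le hR hz hα
    have hQ' : ‖(M α')⁻¹‖ ≤ (-z)⁻¹ := inv_opnorm_le hR hz hα'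
    have h1 := Matrix.l2_opNorm_mul (R * (M α)⁻¹ * R) ((M α')⁻¹)
    have h2 := Matrix.l2_opNorm_mul (R * (M α)⁻¹) R
    have h3 := Matrix.l2_opNorm_mul R ((M α)⁻¹)
    have hprod : ‖R * (M α)⁻¹ * R * (M α')⁻¹‖ ≤ ‖R‖ ^ 2 * ((-z)⁻¹) ^ 2 := by
      have n1 : (0:ℝ) ≤ ‖R‖ := norm_nonneg _
      have n2 : (0:ℝ) ≤ ‖(M α)⁻¹‖ := norm_nonneg _
      have n3 : (0:ℝ) ≤ ‖(M α')⁻¹‖ := norm_nonneg _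
      have hiz : (0:ℝ) ≤ (-z)⁻¹ := le_of_lt (inv_pos.mpr hzpos)
      calc ‖R * (M α)⁻¹ * R * (M α')⁻¹‖ ≤ ‖R * (M α)⁻¹ * R‖ * ‖(M α')⁻¹‖ := h1
        _ ≤ (‖R * (M α)⁻¹‖ * ‖R‖) * ‖(M α')⁻¹‖ := mul_le_mul_of_nonneg_right h2 n3
        _ ≤ ((‖R‖ * ‖(M α)⁻¹‖) * ‖R‖) * ‖(M α')⁻¹‖ :=
            mul_le_mul_of_nonneg_right (mul_le_mul_of_nonneg_right h3 n1) n3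
        _ ≤ ((‖R‖ * (-z)⁻¹) * ‖R‖) * (-z)⁻¹ := by
            apply mul_le_mul (mul_le_mul_of_nonneg_right
              (mul_le_mul_of_nonneg_left hQ n1) n1) hQ' n3
            exact mul_nonneg (mul_nonneg n1 hiz) n1
        _ = ‖R‖ ^ 2 * ((-z)⁻¹) ^ 2 := by ring
    have htr := trace_le (R * (M α)⁻¹ * R * (M α')⁻¹)
    rw [norm_mul]
    have habs : ‖(1 / (n : ℂ))‖ = 1 / (n : ℝ) := by
      rw [norm_div, norm_one, Complex.norm_natCast]
    rw [habs]
    have hfinal : (1 / (n:ℝ)) * ‖Matrix.trace (R * (M α)⁻¹ * R * (M α')⁻¹)‖ ≤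
        ‖R‖ ^ 2 * ((-z)⁻¹) ^ 2 := by
      rw [div_mul_eq_mul_div, one_mul, div_le_iff₀ (by exact_mod_cast hn)]
      calc ‖Matrix.trace (R * (M α)⁻¹ * R * (M α')⁻¹)‖
          ≤ n * ‖R * (M α)⁻¹ * R * (M α')⁻¹‖ := htr
        _ ≤ n * (‖R‖ ^ 2 * ((-z)⁻¹) ^ 2) := by
            apply mul_le_mul_of_nonneg_left hprod (by positivity)
        _ = ‖R‖ ^ 2 * ((-z)⁻¹) ^ 2 * n := by ring
    have heq : ‖R‖ ^ 2 * ((-z)⁻¹) ^ 2 = ‖R‖ ^ 2 / z ^ 2 := by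
      have : z ≠ 0 := ne_of_lt hz
      field_simp
    rw [← heq]
    exact hfinal
  constructor
  · exact hbound
  · apply LipschitzOnWith.of_dist_le_mul
    intro α hα α' hα'
    simp only [Set.mem_setOf_eq] at hα hα'
    have hK : ((‖R‖ ^ 2 / z ^ 2).toNNReal : ℝ) = ‖R‖ ^ 2 / z ^ 2 :=
      Real.coe_toNNReal _ (by positivity)
    have hUα := Munit hR hz hα
    have hUα' := Munit hR hz hα'
    have hdiff : (M α)⁻¹ - (M α')⁻¹ = (α' - α) • ((M α)⁻¹ * R * (M α')⁻¹) := by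
      have e1 : (M α)⁻¹ * (M α' - M α) * (M α')⁻¹ = (M α)⁻¹ - (M α')⁻¹ := by
        rw [Matrix.mul_sub, Matrix.sub_mul, Matrix.mul_assoc,
          Matrix.mul_nonsing_inv _ hUα', Matrix.nonsing_inv_mul _ hUα]
        simp
      have e2 : M α' - M α = (α' - α) • R := by
        simp only [hMdef]
        rw [sub_smul]
        abel
      rw [← e1, e2]
      simp only [Matrix.smul_mul, Matrix.mul_smul]
    rw [Complex.dist_eq, Complex.dist_eq]
    have hfeq : (1 / (n : ℂ)) * Matrix.trace (R * (M α)⁻¹) -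
        (1 / (n : ℂ)) * Matrix.trace (R * (M α')⁻¹) =
        (α' - α) * ((1 / (n : ℂ)) * Matrix.trace (R * (M α)⁻¹ * R * (M α')⁻¹)) := by
      rw [← mul_sub, ← Matrix.trace_sub, ← Matrix.mul_sub, hdiff, Matrix.mul_smul,
        Matrix.trace_smul, smul_eq_mul, ← Matrix.mul_assoc, ← Matrix.mul_assoc]
      ring
    rw [hfeq, norm_mul, hK]
    calc ‖α' - α‖ *
          ‖(1 / (n : ℂ)) * Matrix.trace (R * (M α)⁻¹ * R * (M α')⁻¹)‖
        ≤ ‖α' - α‖ * (‖R‖ ^ 2 / z ^ 2) :=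
          mul_le_mul_of_nonneg_left (hbound α α' hα hα') (norm_nonneg _)
      _ = ‖R‖ ^ 2 / z ^ 2 * ‖α - α'‖ := by
          rw [show α' - α = -(α - α') by ring, norm_neg]; ring
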